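/- The set of complex numbers z satisfying conj(z)^4 = z^2 + 4z (i.e., the parameter choice a = 4, b = 0) is finite and has exactly 6 elements. -/

import Mathlib

private lemma pp_neg1 (x : ℝ) (h : x ≤ -6/5) : 0 < 16*x^6+8*x^4+32*x^3-3*x^2-8*x-4 := by
  have ht : (0:ℝ) ≤ -6/5 - x := by linarith
  nlinarith [pow_nonneg ht 2, pow_nonneg ht 3, pow_nonneg ht 4, pow_nonneg ht 5, pow_nonneg ht 6]

private lemma pp_mid1 (x : ℝ) (h1 : -11/10 ≤ x) (h2 : x ≤ -1/4) :
    16*x^6+8*x^4+32*x^3-3*x^2-8*x-4 < 0 := by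
  have hu : (0:ℝ) ≤ x + 11/10 := by linarith
  have hv : (0:ℝ) ≤ -1/4 - x := by linarith
  nlinarith [mul_nonneg (pow_nonneg hu 6) (pow_nonneg hv 0),
    mul_nonneg (pow_nonneg hu 5) (pow_nonneg hv 1),
    mul_nonneg (pow_nonneg hu 4) (pow_nonneg hv 2),
    mul_nonneg (pow_nonneg hu 3) (pow_nonneg hv 3),
    mul_nonneg (pow_nonneg hu 2) (pow_nonneg hv 4),
    mul_nonneg (pow_nonneg hu 1) (pow_nonneg hv 5),
    mul_nonneg (pow_nonneg hu 0) (pow_nonneg hv 6)]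

private lemma pp_mid2 (x : ℝ) (h1 : -1/4 ≤ x) (h2 : x ≤ 3/5) :
    16*x^6+8*x^4+32*x^3-3*x^2-8*x-4 < 0 := by
  have hu : (0:ℝ) ≤ x + 1/4 := by linarith
  have hv : (0:ℝ) ≤ 3/5 - x := by linarith
  nlinarith [mul_nonneg (pow_nonneg hu 6) (pow_nonneg hv 0),
    mul_nonneg (pow_nonneg hu 5) (pow_nonneg hv 1),
    mul_nonneg (pow_nonneg hu 4) (pow_nonneg hv 2),
    mul_nonneg (pow_nonneg hu 3) (pow_nonneg hv 3),
    mul_nonneg (pow_nonneg hu 2) (pow_nonneg hv 4),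
    mul_nonneg (pow_nonneg hu 1) (pow_nonneg hv 5),
    mul_nonneg (pow_nonneg hu 0) (pow_nonneg hv 6)]

private lemma pp_pos1 (x : ℝ) (h : 33/50 ≤ x) : 0 < 16*x^6+8*x^4+32*x^3-3*x^2-8*x-4 := by
  have ht : (0:ℝ) ≤ x - 33/50 := by linarith
  nlinarith [pow_nonneg ht 2, pow_nonneg ht 3, pow_nonneg ht 4, pow_nonneg ht 5, pow_nonneg ht 6]

private lemma pp_loc (x : ℝ) (h : 16*x^6+8*x^4+32*x^3-3*x^2-8*x-4 = 0) :
    (-6/5 ≤ x ∧ x ≤ -11/10) ∨ (3/5 ≤ x ∧ x ≤ 33/50) := by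
  by_contra hc
  push_neg at hc
  rcases le_or_gt x (-6/5) with h1 | h1
  · exact absurd h (ne_of_gt (pp_neg1 x h1))
  rcases le_or_gt x (-11/10) with h2 | h2
  · exact absurd (hc.1 h1.le) (not_lt.mpr h2)
  rcases le_or_gt x (-1/4) with h3 | h3
  · exact absurd h (ne_of_lt (pp_mid1 x h2.le h3))
  rcases le_or_gt x (3/5) with h4 | h4
  · exact absurd h (ne_of_lt (pp_mid2 x h3.le h4))
  rcases le_or_gt x (33/50) with h5 | h5
  · exact absurd (hc.2 h4.le) (not_lt.mpr h5)
  · exact absurd h (ne_of_gt (pp_pos1 x h5.le))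

private lemma gneg (x y : ℝ) (hx1 : -6/5 ≤ x) (hx2 : x ≤ -11/10) (hy1 : -6/5 ≤ y)
    (hy2 : y ≤ -11/10) :
    16*(x^5+x^4*y+x^3*y^2+x^2*y^3+x*y^4+y^5) + 8*(x^3+x^2*y+x*y^2+y^3)
      + 32*(x^2+x*y+y^2) - 3*(x+y) - 8 < 0 := by
  have hu : (0:ℝ) ≤ x + 6/5 := by linarith
  have hv : (0:ℝ) ≤ -11/10 - x := by linarith
  have hU : (0:ℝ) ≤ y + 6/5 := by linarith
  have hV : (0:ℝ) ≤ -11/10 - y := by linarith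
  linarith [mul_nonneg (mul_nonneg (pow_nonneg hu 0) (pow_nonneg hv 5)) (mul_nonneg (pow_nonneg hU 0) (pow_nonneg hV 5)),
    mul_nonneg (mul_nonneg (pow_nonneg hu 0) (pow_nonneg hv 5)) (mul_nonneg (pow_nonneg hU 1) (pow_nonneg hV 4)),
    mul_nonneg (mul_nonneg (pow_nonneg hu 0) (pow_nonneg hv 5)) (mul_nonneg (pow_nonneg hU 2) (pow_nonneg hV 3)),
    mul_nonneg (mul_nonneg (pow_nonneg hu 0) (pow_nonneg hv 5)) (mul_nonneg (pow_nonneg hU 3) (pow_nonneg hV 2)),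
    mul_nonneg (mul_nonneg (pow_nonneg hu 0) (pow_nonneg hv 5)) (mul_nonneg (pow_nonneg hU 4) (pow_nonneg hV 1)),
    mul_nonneg (mul_nonneg (pow_nonneg hu 0) (pow_nonneg hv 5)) (mul_nonneg (pow_nonneg hU 5) (pow_nonneg hV 0)),
    mul_nonneg (mul_nonneg (pow_nonneg hu 1) (pow_nonneg hv 4)) (mul_nonneg (pow_nonneg hU 0) (pow_nonneg hV 5)),
    mul_nonneg (mul_nonneg (pow_nonneg hu 1) (pow_nonneg hv 4)) (mul_nonneg (pow_nonneg hU 1) (pow_nonneg hV 4)),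
    mul_nonneg (mul_nonneg (pow_nonneg hu 1) (pow_nonneg hv 4)) (mul_nonneg (pow_nonneg hU 2) (pow_nonneg hV 3)),
    mul_nonneg (mul_nonneg (pow_nonneg hu 1) (pow_nonneg hv 4)) (mul_nonneg (pow_nonneg hU 3) (pow_nonneg hV 2)),
    mul_nonneg (mul_nonneg (pow_nonneg hu 1) (pow_nonneg hv 4)) (mul_nonneg (pow_nonneg hU 4) (pow_nonneg hV 1)),
    mul_nonneg (mul_nonneg (pow_nonneg hu 1) (pow_nonneg hv 4)) (mul_nonneg (pow_nonneg hU 5) (pow_nonneg hV 0)),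
    mul_nonneg (mul_nonneg (pow_nonneg hu 2) (pow_nonneg hv 3)) (mul_nonneg (pow_nonneg hU 0) (pow_nonneg hV 5)),
    mul_nonneg (mul_nonneg (pow_nonneg hu 2) (pow_nonneg hv 3)) (mul_nonneg (pow_nonneg hU 1) (pow_nonneg hV 4)),
    mul_nonneg (mul_nonneg (pow_nonneg hu 2) (pow_nonneg hv 3)) (mul_nonneg (pow_nonneg hU 2) (pow_nonneg hV 3)),
    mul_nonneg (mul_nonneg (pow_nonneg hu 2) (pow_nonneg hv 3)) (mul_nonneg (pow_nonneg hU 3) (pow_nonneg hV 2)),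
    mul_nonneg (mul_nonneg (pow_nonneg hu 2) (pow_nonneg hv 3)) (mul_nonneg (pow_nonneg hU 4) (pow_nonneg hV 1)),
    mul_nonneg (mul_nonneg (pow_nonneg hu 2) (pow_nonneg hv 3)) (mul_nonneg (pow_nonneg hU 5) (pow_nonneg hV 0)),
    mul_nonneg (mul_nonneg (pow_nonneg hu 3) (pow_nonneg hv 2)) (mul_nonneg (pow_nonneg hU 0) (pow_nonneg hV 5)),
    mul_nonneg (mul_nonneg (pow_nonneg hu 3) (pow_nonneg hv 2)) (mul_nonneg (pow_nonneg hU 1) (pow_nonneg hV 4)),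
    mul_nonneg (mul_nonneg (pow_nonneg hu 3) (pow_nonneg hv 2)) (mul_nonneg (pow_nonneg hU 2) (pow_nonneg hV 3)),
    mul_nonneg (mul_nonneg (pow_nonneg hu 3) (pow_nonneg hv 2)) (mul_nonneg (pow_nonneg hU 3) (pow_nonneg hV 2)),
    mul_nonneg (mul_nonneg (pow_nonneg hu 3) (pow_nonneg hv 2)) (mul_nonneg (pow_nonneg hU 4) (pow_nonneg hV 1)),
    mul_nonneg (mul_nonneg (pow_nonneg hu 3) (pow_nonneg hv 2)) (mul_nonneg (pow_nonneg hU 5) (pow_nonneg hV 0)),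
    mul_nonneg (mul_nonneg (pow_nonneg hu 4) (pow_nonneg hv 1)) (mul_nonneg (pow_nonneg hU 0) (pow_nonneg hV 5)),
    mul_nonneg (mul_nonneg (pow_nonneg hu 4) (pow_nonneg hv 1)) (mul_nonneg (pow_nonneg hU 1) (pow_nonneg hV 4)),
    mul_nonneg (mul_nonneg (pow_nonneg hu 4) (pow_nonneg hv 1)) (mul_nonneg (pow_nonneg hU 2) (pow_nonneg hV 3)),
    mul_nonneg (mul_nonneg (pow_nonneg hu 4) (pow_nonneg hv 1)) (mul_nonneg (pow_nonneg hU 3) (pow_nonneg hV 2)),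
    mul_nonneg (mul_nonneg (pow_nonneg hu 4) (pow_nonneg hv 1)) (mul_nonneg (pow_nonneg hU 4) (pow_nonneg hV 1)),
    mul_nonneg (mul_nonneg (pow_nonneg hu 4) (pow_nonneg hv 1)) (mul_nonneg (pow_nonneg hU 5) (pow_nonneg hV 0)),
    mul_nonneg (mul_nonneg (pow_nonneg hu 5) (pow_nonneg hv 0)) (mul_nonneg (pow_nonneg hU 0) (pow_nonneg hV 5)),
    mul_nonneg (mul_nonneg (pow_nonneg hu 5) (pow_nonneg hv 0)) (mul_nonneg (pow_nonneg hU 1) (pow_nonneg hV 4)),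
    mul_nonneg (mul_nonneg (pow_nonneg hu 5) (pow_nonneg hv 0)) (mul_nonneg (pow_nonneg hU 2) (pow_nonneg hV 3)),
    mul_nonneg (mul_nonneg (pow_nonneg hu 5) (pow_nonneg hv 0)) (mul_nonneg (pow_nonneg hU 3) (pow_nonneg hV 2)),
    mul_nonneg (mul_nonneg (pow_nonneg hu 5) (pow_nonneg hv 0)) (mul_nonneg (pow_nonneg hU 4) (pow_nonneg hV 1)),
    mul_nonneg (mul_nonneg (pow_nonneg hu 5) (pow_nonneg hv 0)) (mul_nonneg (pow_nonneg hU 5) (pow_nonneg hV 0))]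

private lemma gpos (x y : ℝ) (hx1 : 3/5 ≤ x) (hx2 : x ≤ 33/50) (hy1 : 3/5 ≤ y)
    (hy2 : y ≤ 33/50) :
    0 < 16*(x^5+x^4*y+x^3*y^2+x^2*y^3+x*y^4+y^5) + 8*(x^3+x^2*y+x*y^2+y^3)
      + 32*(x^2+x*y+y^2) - 3*(x+y) - 8 := by
  have hu : (0:ℝ) ≤ x - 3/5 := by linarith
  have hv : (0:ℝ) ≤ 33/50 - x := by linarith
  have hU : (0:ℝ) ≤ y - 3/5 := by linarith
  have hV : (0:ℝ) ≤ 33/50 - y := by linarith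
  linarith [mul_nonneg (mul_nonneg (pow_nonneg hu 0) (pow_nonneg hv 5)) (mul_nonneg (pow_nonneg hU 0) (pow_nonneg hV 5)),
    mul_nonneg (mul_nonneg (pow_nonneg hu 0) (pow_nonneg hv 5)) (mul_nonneg (pow_nonneg hU 1) (pow_nonneg hV 4)),
    mul_nonneg (mul_nonneg (pow_nonneg hu 0) (pow_nonneg hv 5)) (mul_nonneg (pow_nonneg hU 2) (pow_nonneg hV 3)),
    mul_nonneg (mul_nonneg (pow_nonneg hu 0) (pow_nonneg hv 5)) (mul_nonneg (pow_nonneg hU 3) (pow_nonneg hV 2)),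
    mul_nonneg (mul_nonneg (pow_nonneg hu 0) (pow_nonneg hv 5)) (mul_nonneg (pow_nonneg hU 4) (pow_nonneg hV 1)),
    mul_nonneg (mul_nonneg (pow_nonneg hu 0) (pow_nonneg hv 5)) (mul_nonneg (pow_nonneg hU 5) (pow_nonneg hV 0)),
    mul_nonneg (mul_nonneg (pow_nonneg hu 1) (pow_nonneg hv 4)) (mul_nonneg (pow_nonneg hU 0) (pow_nonneg hV 5)),
    mul_nonneg (mul_nonneg (pow_nonneg hu 1) (pow_nonneg hv 4)) (mul_nonneg (pow_nonneg hU 1) (pow_nonneg hV 4)),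
    mul_nonneg (mul_nonneg (pow_nonneg hu 1) (pow_nonneg hv 4)) (mul_nonneg (pow_nonneg hU 2) (pow_nonneg hV 3)),
    mul_nonneg (mul_nonneg (pow_nonneg hu 1) (pow_nonneg hv 4)) (mul_nonneg (pow_nonneg hU 3) (pow_nonneg hV 2)),
    mul_nonneg (mul_nonneg (pow_nonneg hu 1) (pow_nonneg hv 4)) (mul_nonneg (pow_nonneg hU 4) (pow_nonneg hV 1)),
    mul_nonneg (mul_nonneg (pow_nonneg hu 1) (pow_nonneg hv 4)) (mul_nonneg (pow_nonneg hU 5) (pow_nonneg hV 0)),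
    mul_nonneg (mul_nonneg (pow_nonneg hu 2) (pow_nonneg hv 3)) (mul_nonneg (pow_nonneg hU 0) (pow_nonneg hV 5)),
    mul_nonneg (mul_nonneg (pow_nonneg hu 2) (pow_nonneg hv 3)) (mul_nonneg (pow_nonneg hU 1) (pow_nonneg hV 4)),
    mul_nonneg (mul_nonneg (pow_nonneg hu 2) (pow_nonneg hv 3)) (mul_nonneg (pow_nonneg hU 2) (pow_nonneg hV 3)),
    mul_nonneg (mul_nonneg (pow_nonneg hu 2) (pow_nonneg hv 3)) (mul_nonneg (pow_nonneg hU 3) (pow_nonneg hV 2)),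
    mul_nonneg (mul_nonneg (pow_nonneg hu 2) (pow_nonneg hv 3)) (mul_nonneg (pow_nonneg hU 4) (pow_nonneg hV 1)),
    mul_nonneg (mul_nonneg (pow_nonneg hu 2) (pow_nonneg hv 3)) (mul_nonneg (pow_nonneg hU 5) (pow_nonneg hV 0)),
    mul_nonneg (mul_nonneg (pow_nonneg hu 3) (pow_nonneg hv 2)) (mul_nonneg (pow_nonneg hU 0) (pow_nonneg hV 5)),
    mul_nonneg (mul_nonneg (pow_nonneg hu 3) (pow_nonneg hv 2)) (mul_nonneg (pow_nonneg hU 1) (pow_nonneg hV 4)),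
    mul_nonneg (mul_nonneg (pow_nonneg hu 3) (pow_nonneg hv 2)) (mul_nonneg (pow_nonneg hU 2) (pow_nonneg hV 3)),
    mul_nonneg (mul_nonneg (pow_nonneg hu 3) (pow_nonneg hv 2)) (mul_nonneg (pow_nonneg hU 3) (pow_nonneg hV 2)),
    mul_nonneg (mul_nonneg (pow_nonneg hu 3) (pow_nonneg hv 2)) (mul_nonneg (pow_nonneg hU 4) (pow_nonneg hV 1)),
    mul_nonneg (mul_nonneg (pow_nonneg hu 3) (pow_nonneg hv 2)) (mul_nonneg (pow_nonneg hU 5) (pow_nonneg hV 0)),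
    mul_nonneg (mul_nonneg (pow_nonneg hu 4) (pow_nonneg hv 1)) (mul_nonneg (pow_nonneg hU 0) (pow_nonneg hV 5)),
    mul_nonneg (mul_nonneg (pow_nonneg hu 4) (pow_nonneg hv 1)) (mul_nonneg (pow_nonneg hU 1) (pow_nonneg hV 4)),
    mul_nonneg (mul_nonneg (pow_nonneg hu 4) (pow_nonneg hv 1)) (mul_nonneg (pow_nonneg hU 2) (pow_nonneg hV 3)),
    mul_nonneg (mul_nonneg (pow_nonneg hu 4) (pow_nonneg hv 1)) (mul_nonneg (pow_nonneg hU 3) (pow_nonneg hV 2)),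
    mul_nonneg (mul_nonneg (pow_nonneg hu 4) (pow_nonneg hv 1)) (mul_nonneg (pow_nonneg hU 4) (pow_nonneg hV 1)),
    mul_nonneg (mul_nonneg (pow_nonneg hu 4) (pow_nonneg hv 1)) (mul_nonneg (pow_nonneg hU 5) (pow_nonneg hV 0)),
    mul_nonneg (mul_nonneg (pow_nonneg hu 5) (pow_nonneg hv 0)) (mul_nonneg (pow_nonneg hU 0) (pow_nonneg hV 5)),
    mul_nonneg (mul_nonneg (pow_nonneg hu 5) (pow_nonneg hv 0)) (mul_nonneg (pow_nonneg hU 1) (pow_nonneg hV 4)),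
    mul_nonneg (mul_nonneg (pow_nonneg hu 5) (pow_nonneg hv 0)) (mul_nonneg (pow_nonneg hU 2) (pow_nonneg hV 3)),
    mul_nonneg (mul_nonneg (pow_nonneg hu 5) (pow_nonneg hv 0)) (mul_nonneg (pow_nonneg hU 3) (pow_nonneg hV 2)),
    mul_nonneg (mul_nonneg (pow_nonneg hu 5) (pow_nonneg hv 0)) (mul_nonneg (pow_nonneg hU 4) (pow_nonneg hV 1)),
    mul_nonneg (mul_nonneg (pow_nonneg hu 5) (pow_nonneg hv 0)) (mul_nonneg (pow_nonneg hU 5) (pow_nonneg hV 0))]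

private lemma uniq_box1 (x y : ℝ) (hx1 : -6/5 ≤ x) (hx2 : x ≤ -11/10) (hy1 : -6/5 ≤ y)
    (hy2 : y ≤ -11/10) (hx : 16*x^6+8*x^4+32*x^3-3*x^2-8*x-4 = 0)
    (hy : 16*y^6+8*y^4+32*y^3-3*y^2-8*y-4 = 0) : x = y := by
  have hg := gneg x y hx1 hx2 hy1 hy2
  have h0 : (x - y) * (16*(x^5+x^4*y+x^3*y^2+x^2*y^3+x*y^4+y^5) + 8*(x^3+x^2*y+x*y^2+y^3)
      + 32*(x^2+x*y+y^2) - 3*(x+y) - 8) = 0 := by linear_combination hx - hy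
  rcases mul_eq_zero.mp h0 with h | h
  · linarith
  · exact absurd h (by linarith)

private lemma uniq_box2 (x y : ℝ) (hx1 : 3/5 ≤ x) (hx2 : x ≤ 33/50) (hy1 : 3/5 ≤ y)
    (hy2 : y ≤ 33/50) (hx : 16*x^6+8*x^4+32*x^3-3*x^2-8*x-4 = 0)
    (hy : 16*y^6+8*y^4+32*y^3-3*y^2-8*y-4 = 0) : x = y := by
  have hg := gpos x y hx1 hx2 hy1 hy2
  have h0 : (x - y) * (16*(x^5+x^4*y+x^3*y^2+x^2*y^3+x*y^4+y^5) + 8*(x^3+x^2*y+x*y^2+y^3)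
      + 32*(x^2+x*y+y^2) - 3*(x+y) - 8) = 0 := by linear_combination hx - hy
  rcases mul_eq_zero.mp h0 with h | h
  · linarith
  · exact absurd h (by linarith)

private lemma uniq_cubic (x r : ℝ) (hr1 : 1 ≤ r) (hr : r^3 = r + 4) (hx : x^3 = x + 4) :
    x = r := by
  have hx1 : 1 < x := by
    by_contra h
    push_neg at h
    nlinarith [mul_nonneg (by linarith : (0:ℝ) ≤ 1 - x) (sq_nonneg (x+1)), sq_nonneg x]
  have h0 : (x - r) * (x^2 + x*r + r^2 - 1) = 0 := by linear_combination hx - hr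
  rcases mul_eq_zero.mp h0 with h | h
  · linarith
  · nlinarith

private lemma ex_box1 : ∃ x : ℝ, (-6/5 ≤ x ∧ x ≤ -11/10) ∧ 16*x^6+8*x^4+32*x^3-3*x^2-8*x-4 = 0 := by
  have hc : ContinuousOn (fun x : ℝ => 16*x^6+8*x^4+32*x^3-3*x^2-8*x-4)
      (Set.Icc (-6/5) (-11/10)) := by fun_prop
  have h := intermediate_value_Icc' (by norm_num : (-6/5:ℝ) ≤ -11/10) hc
  have h0 : (0:ℝ) ∈ Set.Icc (16*(-11/10:ℝ)^6+8*(-11/10)^4+32*(-11/10)^3-3*(-11/10)^2-8*(-11/10)-4)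
      (16*(-6/5:ℝ)^6+8*(-6/5)^4+32*(-6/5)^3-3*(-6/5)^2-8*(-6/5)-4) := by
    constructor <;> norm_num
  obtain ⟨x, hx, hx0⟩ := h h0
  exact ⟨x, ⟨hx.1, hx.2⟩, hx0⟩

private lemma ex_box2 : ∃ x : ℝ, (3/5 ≤ x ∧ x ≤ 33/50) ∧ 16*x^6+8*x^4+32*x^3-3*x^2-8*x-4 = 0 := by
  have hc : ContinuousOn (fun x : ℝ => 16*x^6+8*x^4+32*x^3-3*x^2-8*x-4)
      (Set.Icc (3/5) (33/50)) := by fun_prop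
  have h := intermediate_value_Icc (by norm_num : (3/5:ℝ) ≤ 33/50) hc
  have h0 : (0:ℝ) ∈ Set.Icc (16*(3/5:ℝ)^6+8*(3/5)^4+32*(3/5)^3-3*(3/5)^2-8*(3/5)-4)
      (16*(33/50:ℝ)^6+8*(33/50)^4+32*(33/50)^3-3*(33/50)^2-8*(33/50)-4) := by
    constructor <;> norm_num
  obtain ⟨x, hx, hx0⟩ := h h0
  exact ⟨x, ⟨hx.1, hx.2⟩, hx0⟩

private lemma ex_cubic : ∃ x : ℝ, (1 ≤ x ∧ x ≤ 2) ∧ x^3 = x + 4 := by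
  have hc : ContinuousOn (fun x : ℝ => x^3 - x - 4) (Set.Icc 1 2) := by fun_prop
  have h := intermediate_value_Icc (by norm_num : (1:ℝ) ≤ 2) hc
  have h0 : (0:ℝ) ∈ Set.Icc ((1:ℝ)^3-1-4) ((2:ℝ)^3-2-4) := by constructor <;> norm_num
  obtain ⟨x, hx, hx0⟩ := h h0
  refine ⟨x, ⟨hx.1, hx.2⟩, ?_⟩
  simp only at hx0
  linarith

private lemma mem_iff (z : ℂ) :
    (starRingEnd ℂ z) ^ 4 = z ^ 2 + 4 * z ↔
      ((z.re^2 - z.im^2)^2 - 4*z.re^2*z.im^2 = z.re^2 - z.im^2 + 4*z.re ∧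
       -(4*z.re*z.im*(z.re^2 - z.im^2)) = 2*z.re*z.im + 4*z.im) := by
  rw [Complex.ext_iff]
  simp only [Complex.add_re, Complex.add_im, Complex.mul_re, Complex.mul_im,
    pow_succ, pow_zero, one_mul, Complex.conj_re, Complex.conj_im,
    Complex.re_ofNat, Complex.im_ofNat]
  constructor <;> rintro ⟨h1, h2⟩ <;>
    exact ⟨by linear_combination h1, by linear_combination h2⟩

set_option maxHeartbeats 2000000 in
/-- the equation `conj z ^ 4 = z ^ 2 + 4 z` has exactly 6 complex solutions. -/
theorem stmt_5 :
    {z : ℂ | (starRingEnd ℂ z) ^ 4 = z ^ 2 + 4 * z}.Finite ∧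
      {z : ℂ | (starRingEnd ℂ z) ^ 4 = z ^ 2 + 4 * z}.ncard = 6 := by
  obtain ⟨r, ⟨hr1, hr2⟩, hr⟩ := ex_cubic
  obtain ⟨α, ⟨hα1, hα2⟩, hα⟩ := ex_box1
  obtain ⟨β, ⟨hβ1, hβ2⟩, hβ⟩ := ex_box2
  have hα0 : α ≠ 0 := by intro h; rw [h] at hα2; norm_num at hα2
  have hβ0 : (0:ℝ) < β := by linarith
  have hqα : 0 < (2*α^3+α+2)/(2*α) := div_pos_of_neg_of_neg (by nlinarith) (by linarith)
  have hqβ : 0 < (2*β^3+β+2)/(2*β) := div_pos (by nlinarith) (by linarith)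
  set yα := Real.sqrt ((2*α^3+α+2)/(2*α)) with hyαdef
  set yβ := Real.sqrt ((2*β^3+β+2)/(2*β)) with hyβdef
  have hyα : 0 < yα := Real.sqrt_pos.mpr hqα
  have hyβ : 0 < yβ := Real.sqrt_pos.mpr hqβ
  have hyα2 : yα^2 = (2*α^3+α+2)/(2*α) := Real.sq_sqrt hqα.le
  have hyβ2 : yβ^2 = (2*β^3+β+2)/(2*β) := Real.sq_sqrt hqβ.le
  have he2α : 2*α*yα^2 = 2*α^3+α+2 := by rw [hyα2]; field_simp
  have he2β : 2*β*yβ^2 = 2*β^3+β+2 := by rw [hyβ2]; field_simp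
  have hSet : {z : ℂ | (starRingEnd ℂ z) ^ 4 = z ^ 2 + 4 * z} =
      {0, (r:ℂ), (α:ℂ) + yα*Complex.I, (α:ℂ) - yα*Complex.I,
        (β:ℂ) + yβ*Complex.I, (β:ℂ) - yβ*Complex.I} := by
    ext z
    simp only [Set.mem_setOf_eq, Set.mem_insert_iff, Set.mem_singleton_iff]
    rw [mem_iff]
    constructor
    · rintro ⟨h1, h2⟩
      have h2' : z.im * (2*z.re*z.im^2 - 2*z.re^3 - z.re - 2) = 0 := by
        linear_combination h2 / 2
      rcases mul_eq_zero.mp h2' with hy0 | he2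
      · rw [hy0] at h1
        have h1' : z.re * (z.re^3 - z.re - 4) = 0 := by linear_combination h1
        rcases mul_eq_zero.mp h1' with hx0 | hx1
        · left
          exact Complex.ext hx0 hy0
        · right; left
          have hxr : z.re = r := uniq_cubic z.re r hr1 hr (by linarith)
          exact Complex.ext (by simpa using hxr) (by simpa using hy0)
      · have he2' : 2*z.re*z.im^2 = 2*z.re^3 + z.re + 2 := by linarith
        have hx0 : z.re ≠ 0 := by
          intro h; rw [h] at he2'; norm_num at he2'
        have hp : 16*z.re^6+8*z.re^4+32*z.re^3-3*z.re^2-8*z.re-4 = 0 := by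
          linear_combination (-4*z.re^2) * h1 + (2*z.re*z.im^2-10*z.re^3+3*z.re+2) * he2'
        rcases pp_loc z.re hp with ⟨hb1, hb2⟩ | ⟨hb1, hb2⟩
        · have hxα : z.re = α := uniq_box1 z.re α hb1 hb2 hα1 hα2 hp hα
          have hyy : z.im^2 = yα^2 := by
            have h5 : 2*α*(z.im^2 - yα^2) = 0 := by
              rw [hxα] at he2'; linear_combination he2' - he2α
            have := mul_eq_zero.mp h5
            rcases this with h | h
            · exact absurd h (by intro hh; exact hα0 (by linarith))
            · linarith
          have : (z.im - yα) * (z.im + yα) = 0 := by linear_combination hyy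
          rcases mul_eq_zero.mp this with h | h
          · right; right; left
            exact Complex.ext (by simpa using hxα) (by simp; linarith)
          · right; right; right; left
            exact Complex.ext (by simpa using hxα) (by simp; linarith)
        · have hxβ : z.re = β := uniq_box2 z.re β hb1 hb2 hβ1 hβ2 hp hβ
          have hyy : z.im^2 = yβ^2 := by
            have h5 : 2*β*(z.im^2 - yβ^2) = 0 := by
              rw [hxβ] at he2'; linear_combination he2' - he2β
            rcases mul_eq_zero.mp h5 with h | h
            · exact absurd h (by intro hh; nlinarith)
            · linarith
          have : (z.im - yβ) * (z.im + yβ) = 0 := by linear_combination hyy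
          rcases mul_eq_zero.mp this with h | h
          · right; right; right; right; left
            exact Complex.ext (by simpa using hxβ) (by simp; linarith)
          · right; right; right; right; right
            exact Complex.ext (by simpa using hxβ) (by simp; linarith)
    · intro h
      have e1α : ((α^2 - yα^2)^2 - 4*α^2*yα^2 = α^2 - yα^2 + 4*α) := by
        have h4 : 4*α^2*((α^2 - yα^2)^2 - 4*α^2*yα^2 - (α^2 - yα^2 + 4*α)) = 0 := by
          linear_combination (-1) * hα + (2*α*yα^2-10*α^3+3*α+2) * he2α
        rcases mul_eq_zero.mp h4 with h' | h'
        · exact absurd h' (by positivity)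
        · linarith
      have e1β : ((β^2 - yβ^2)^2 - 4*β^2*yβ^2 = β^2 - yβ^2 + 4*β) := by
        have h4 : 4*β^2*((β^2 - yβ^2)^2 - 4*β^2*yβ^2 - (β^2 - yβ^2 + 4*β)) = 0 := by
          linear_combination (-1) * hβ + (2*β*yβ^2-10*β^3+3*β+2) * he2β
        rcases mul_eq_zero.mp h4 with h' | h'
        · exact absurd h' (by positivity)
        · linarith
      rcases h with h|h|h|h|h|h <;> subst h <;>
        simp only [Complex.add_re, Complex.add_im, Complex.sub_re, Complex.sub_im,
          Complex.mul_re, Complex.mul_im, Complex.I_re, Complex.I_im,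
          Complex.ofReal_re, Complex.ofReal_im, Complex.zero_re, Complex.zero_im,
          mul_zero, mul_one, zero_mul, sub_zero, zero_sub, add_zero, zero_add, neg_zero]
      · constructor <;> norm_num
      · constructor
        · linear_combination r * hr
        · simp
      · exact ⟨by linear_combination e1α, by linear_combination (2*yα) * he2α⟩
      · exact ⟨by linear_combination e1α, by linear_combination (-2*yα) * he2α⟩
      · exact ⟨by linear_combination e1β, by linear_combination (2*yβ) * he2β⟩
      · exact ⟨by linear_combination e1β, by linear_combination (-2*yβ) * he2β⟩
  rw [hSet]
  have hd : ∀ u v : ℝ, ((u:ℂ) + v*Complex.I).re = u ∧ ((u:ℂ) + v*Complex.I).im = v := by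
    intro u v; constructor <;> simp
  have hd' : ∀ u v : ℝ, ((u:ℂ) - v*Complex.I).re = u ∧ ((u:ℂ) - v*Complex.I).im = -v := by
    intro u v; constructor <;> simp
  constructor
  · exact (Set.finite_singleton _).insert _ |>.insert _ |>.insert _ |>.insert _ |>.insert _
  · have hne : ∀ w₁ w₂ : ℂ, w₁.re ≠ w₂.re → w₁ ≠ w₂ := by
      intro w₁ w₂ h hh; exact h (by rw [hh])
    have hni : ∀ w₁ w₂ : ℂ, w₁.im ≠ w₂.im → w₁ ≠ w₂ := by
      intro w₁ w₂ h hh; exact h (by rw [hh])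
    have n1 : (0:ℂ) ∉ ({(r:ℂ), (α:ℂ) + yα*Complex.I, (α:ℂ) - yα*Complex.I,
        (β:ℂ) + yβ*Complex.I, (β:ℂ) - yβ*Complex.I} : Set ℂ) := by
      simp only [Set.mem_insert_iff, Set.mem_singleton_iff]
      push_neg
      refine ⟨?_, ?_, ?_, ?_, ?_⟩
      · apply hne; rw [Complex.zero_re, Complex.ofReal_re]; exact ne_of_lt (by linarith)
      · apply hne; rw [Complex.zero_re, (hd α yα).1]; exact ne_of_gt (by linarith)
      · apply hne; rw [Complex.zero_re, (hd' α yα).1]; exact ne_of_gt (by linarith)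
      · apply hne; rw [Complex.zero_re, (hd β yβ).1]; exact ne_of_lt (by linarith)
      · apply hne; rw [Complex.zero_re, (hd' β yβ).1]; exact ne_of_lt (by linarith)
    have n2 : (r:ℂ) ∉ ({(α:ℂ) + yα*Complex.I, (α:ℂ) - yα*Complex.I,
        (β:ℂ) + yβ*Complex.I, (β:ℂ) - yβ*Complex.I} : Set ℂ) := by
      simp only [Set.mem_insert_iff, Set.mem_singleton_iff]
      push_neg
      refine ⟨?_, ?_, ?_, ?_⟩
      · apply hne; rw [Complex.ofReal_re, (hd α yα).1]; exact ne_of_gt (by linarith)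
      · apply hne; rw [Complex.ofReal_re, (hd' α yα).1]; exact ne_of_gt (by linarith)
      · apply hne; rw [Complex.ofReal_re, (hd β yβ).1]; exact ne_of_gt (by linarith)
      · apply hne; rw [Complex.ofReal_re, (hd' β yβ).1]; exact ne_of_gt (by linarith)
    have n3 : (α:ℂ) + yα*Complex.I ∉ ({(α:ℂ) - yα*Complex.I,
        (β:ℂ) + yβ*Complex.I, (β:ℂ) - yβ*Complex.I} : Set ℂ) := by
      simp only [Set.mem_insert_iff, Set.mem_singleton_iff]
      push_neg
      refine ⟨?_, ?_, ?_⟩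
      · apply hni; rw [(hd α yα).2, (hd' α yα).2]; exact ne_of_gt (by linarith)
      · apply hne; rw [(hd α yα).1, (hd β yβ).1]; exact ne_of_lt (by linarith)
      · apply hne; rw [(hd α yα).1, (hd' β yβ).1]; exact ne_of_lt (by linarith)
    have n4 : (α:ℂ) - yα*Complex.I ∉ ({(β:ℂ) + yβ*Complex.I,
        (β:ℂ) - yβ*Complex.I} : Set ℂ) := by
      simp only [Set.mem_insert_iff, Set.mem_singleton_iff]
      push_neg
      refine ⟨?_, ?_⟩
      · apply hne; rw [(hd' α yα).1, (hd β yβ).1]; exact ne_of_lt (by linarith)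
      · apply hne; rw [(hd' α yα).1, (hd' β yβ).1]; exact ne_of_lt (by linarith)
    have n5 : (β:ℂ) + yβ*Complex.I ∉ ({(β:ℂ) - yβ*Complex.I} : Set ℂ) := by
      simp only [Set.mem_singleton_iff]
      apply hni; rw [(hd β yβ).2, (hd' β yβ).2]; exact ne_of_gt (by linarith)
    have f5 : ({(β:ℂ) - yβ*Complex.I} : Set ℂ).Finite := Set.finite_singleton _
    have f4 := f5.insert ((β:ℂ) + yβ*Complex.I)
    have f3 := f4.insert ((α:ℂ) - yα*Complex.I)
    have f2 := f3.insert ((α:ℂ) + yα*Complex.I)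
    have f1 := f2.insert ((r:ℂ))
    rw [Set.ncard_insert_of_notMem n1 f1, Set.ncard_insert_of_notMem n2 f2,
      Set.ncard_insert_of_notMem n3 f3, Set.ncard_insert_of_notMem n4 f4,
      Set.ncard_insert_of_notMem n5 f5, Set.ncard_singleton]
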